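/- Let M be a Lorentzian manifold, E and E' two timelike unit vector fields, and Π a degenerate plane at a point. Then 𝒦_{E'}(Π) = 𝒦_E(Π)/g(u,E')², where u ∈ Π is the unique lightlike vector with g(u,E) = 1. In particular, the sign of the lightlike sectional curvature of Π does not depend on the choice of timelike unit vector field. -/

import Mathlib

/-- The lightlike sectional curvature of a degenerate plane `Π = span(u,v)` with
respect to a timelike unit `E` is `𝒦_E(Π) = R(v,u,u,v)/g(v,v)`, where `u ∈ Π` is
the unique lightlike vector with `g(u,E) = 1`.  For another timelike unit `E'`,
the lightlike vector in `Π` normalized for `E'` is `u' = u/g(u,E')`, and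
`𝒦_{E'}(Π) = 𝒦_E(Π)/g(u,E')²`; in particular the sign of the lightlike sectional
curvature does not depend on the choice of timelike unit vector field. -/
theorem stmt_9 {V : Type*} [AddCommGroup V] [Module ℝ V]
    (g : V →ₗ[ℝ] V →ₗ[ℝ] ℝ) (hg : ∀ x y, g x y = g y x)
    (R : V →ₗ[ℝ] V →ₗ[ℝ] V →ₗ[ℝ] V →ₗ[ℝ] ℝ)
    (E E' : V) (hE : g E E = -1) (hE' : g E' E' = -1)
    (u v : V) (hu : g u u = 0) (huE : g u E = 1) (huE' : g u E' ≠ 0)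
    (hv : 0 < g v v) (hvu : g v u = 0) :
    R v ((g u E')⁻¹ • u) ((g u E')⁻¹ • u) v / g v v
      = (R v u u v / g v v) / (g u E') ^ 2 ∧
    (0 < R v ((g u E')⁻¹ • u) ((g u E')⁻¹ • u) v / g v v ↔ 0 < R v u u v / g v v) := by
  have hsq : (0:ℝ) < (g u E') ^ 2 := by positivity
  have key : R v ((g u E')⁻¹ • u) ((g u E')⁻¹ • u) v / g v v
      = (R v u u v / g v v) / (g u E') ^ 2 := by
    simp only [map_smul, smul_eq_mul]
    field_simp
    simp only [LinearMap.smul_apply, smul_eq_mul]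
    field_simp
  refine ⟨key, ?_⟩
  rw [key]
  constructor
  · intro h
    nlinarith [mul_pos h hsq, div_mul_cancel₀ (R v u u v / g v v) (ne_of_gt hsq)]
  · intro h
    exact div_pos h hsq
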